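/- Let p and q be probability mass functions on a finite set S. Then the L1 distance is bounded via the KL divergence: Σ_x |p(x) - q(x)| ≤ √(2 · D_KL(p‖q)), where D_KL(p‖q) = Σ_x p(x) · log(p(x)/q(x)). -/

import Mathlib

open Real Set

noncomputable def phi (t : ℝ) : ℝ := t * Real.log t - t + 1 - 3*(t-1)^2/(2*(t+2))
noncomputable def phi' (t : ℝ) : ℝ := Real.log t - 3*(t-1)*(t+5)/(2*(t+2)^2)

lemma hasDerivAt_phi {t : ℝ} (ht : 0 < t) : HasDerivAt phi (phi' t) t := by
  have h2 : (2*(t+2)) ≠ 0 := by positivity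
  have h1 : HasDerivAt (fun t : ℝ => t * Real.log t - t + 1) (Real.log t) t := by
    simpa using ((Real.hasDerivAt_mul_log ht.ne').sub (hasDerivAt_id t)).add_const 1
  have h3 : HasDerivAt (fun t : ℝ => 3*(t-1)^2/(2*(t+2)))
      ((3*(2*(t-1)) * (2*(t+2)) - 3*(t-1)^2 * 2) / (2*(t+2))^2) t := by
    exact HasDerivAt.div (by simpa using
      (((hasDerivAt_id t).sub_const 1).pow 2).const_mul 3)
      (by simpa using ((hasDerivAt_id t).add_const 2).const_mul 2) h2
  have := h1.sub h3
  refine this.congr_deriv ?_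
  unfold phi'
  field_simp
  ring

lemma hasDerivAt_phi' {t : ℝ} (ht : 0 < t) :
    HasDerivAt phi' (t⁻¹ - 27/(t+2)^3) t := by
  have h2 : (2*(t+2)^2) ≠ 0 := by positivity
  have h3 : HasDerivAt (fun t : ℝ => 3*(t-1)*(t+5)/(2*(t+2)^2))
      (((3*1*(t+5) + 3*(t-1)*1) * (2*(t+2)^2) - 3*(t-1)*(t+5) * (2*(2*(t+2))))
        / (2*(t+2)^2)^2) t := by
    refine HasDerivAt.div ?_ ?_ h2
    · exact (((hasDerivAt_id t).sub_const 1).const_mul 3).mul ((hasDerivAt_id t).add_const 5)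
    · simpa using ((((hasDerivAt_id t).add_const 2).pow 2).const_mul 2)
  have := (Real.hasDerivAt_log ht.ne').sub h3
  refine this.congr_deriv ?_
  have h4 : (t+2) ≠ 0 := by positivity
  field_simp
  ring

lemma phi'_deriv_nonneg {t : ℝ} (ht : 0 < t) : 0 ≤ t⁻¹ - 27/(t+2)^3 := by
  rw [sub_nonneg, div_le_iff₀ (by positivity : (0:ℝ) < (t+2)^3), inv_mul_eq_div,
    le_div_iff₀ ht]
  nlinarith [sq_nonneg (t-1), ht.le]

lemma phi'_mono : MonotoneOn phi' (Set.Ioi (0:ℝ)) := by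
  have hd : ∀ t ∈ interior (Set.Ioi (0:ℝ)), HasDerivAt phi' (t⁻¹ - 27/(t+2)^3) t := by
    rw [interior_Ioi]; exact fun t ht => hasDerivAt_phi' ht
  refine monotoneOn_of_deriv_nonneg (convex_Ioi 0)
    (fun t ht => ((hd t (by rwa [interior_Ioi])).continuousAt.continuousWithinAt)) 
    (fun t ht => (hd t ht).differentiableAt.differentiableWithinAt) (fun t ht => ?_)
  rw [(hd t ht).deriv]
  exact phi'_deriv_nonneg (by rwa [interior_Ioi] at ht)

lemma phi'_one : phi' 1 = 0 := by simp [phi']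

lemma phi_nonneg {t : ℝ} (ht : 0 < t) : 0 ≤ phi t := by
  have hphi1 : phi 1 = 0 := by norm_num [phi]
  rcases le_total t 1 with h | h
  · -- antitone on Ioc 0 1
    have hanti : AntitoneOn phi (Set.Ioc (0:ℝ) 1) := by
      refine antitoneOn_of_deriv_nonpos (convex_Ioc 0 1)
        (fun s hs => (hasDerivAt_phi hs.1).continuousAt.continuousWithinAt)
        (fun s hs => ?_) (fun s hs => ?_)
      · rw [interior_Ioc] at hs
        exact (hasDerivAt_phi hs.1).differentiableAt.differentiableWithinAt
      · rw [interior_Ioc] at hs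
        rw [(hasDerivAt_phi hs.1).deriv]
        have := phi'_mono (Set.mem_Ioi.2 hs.1) (Set.mem_Ioi.2 one_pos) hs.2.le
        rwa [phi'_one] at this
    have := hanti (Set.mem_Ioc.2 ⟨ht, h⟩) (Set.mem_Ioc.2 ⟨one_pos, le_refl 1⟩) h
    linarith
  · have hmono : MonotoneOn phi (Set.Ici (1:ℝ)) := by
      refine monotoneOn_of_deriv_nonneg (convex_Ici 1)
        (fun s hs => (hasDerivAt_phi (lt_of_lt_of_le one_pos hs)).continuousAt.continuousWithinAt)
        (fun s hs => ?_) (fun s hs => ?_)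
      · rw [interior_Ici] at hs
        exact (hasDerivAt_phi (lt_trans one_pos hs)).differentiableAt.differentiableWithinAt
      · rw [interior_Ici] at hs
        rw [(hasDerivAt_phi (lt_trans one_pos hs)).deriv]
        have := phi'_mono (Set.mem_Ioi.2 one_pos) (Set.mem_Ioi.2 (lt_trans one_pos hs)) (le_of_lt hs)
        rwa [phi'_one] at this
    have := hmono (Set.mem_Ici.2 le_rfl) (Set.mem_Ici.2 h) h
    linarith

lemma pointwise_bound {p q : ℝ} (hp : 0 ≤ p) (hq : 0 < q) :
    3*(p-q)^2/(2*(p+2*q)) ≤ p * Real.log (p/q) - p + q := by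
  rcases eq_or_lt_of_le hp with h | h
  · rw [← h]
    rw [div_le_iff₀ (by positivity : (0:ℝ) < 2*(0+2*q))] at *
    nlinarith
  · have ht : 0 < p / q := div_pos h hq
    have key := phi_nonneg ht
    unfold phi at key
    have e1 : q * (p/q * Real.log (p/q) - p/q + 1 - 3*(p/q-1)^2/(2*(p/q+2)))
        = p * Real.log (p/q) - p + q - 3*(p-q)^2/(2*(p+2*q)) := by
      have hq' : q ≠ 0 := hq.ne'
      have h2 : p + 2*q ≠ 0 := by positivity
      field_simp
    nlinarith [mul_nonneg hq.le key]

/-- Pinsker's inequality on a finite set. -/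
theorem pinsker_finite
    {S : Type*} [Fintype S] (p q : S → ℝ)
    (hpnn : ∀ x, 0 ≤ p x) (hpsum : ∑ x, p x = 1)
    (hqnn : ∀ x, 0 ≤ q x) (hqsum : ∑ x, q x = 1)
    (hpos : ∀ x, 0 < p x → 0 < q x) :
    ∑ x, |p x - q x| ≤ Real.sqrt (2 * ∑ x, p x * Real.log (p x / q x)) := by
  classical
  set D := ∑ x, p x * Real.log (p x / q x) with hD
  -- step 1 : sum of pointwise bounds
  have hpzero : ∀ x, q x = 0 → p x = 0 := by
    intro x hx
    by_contra h
    have := hpos x (lt_of_le_of_ne (hpnn x) (Ne.symm h))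
    rw [hx] at this; exact lt_irrefl 0 this
  have hstep1 : ∑ x, 3*(p x - q x)^2/(2*(p x + 2*q x)) ≤ D := by
    have : ∑ x, 3*(p x - q x)^2/(2*(p x + 2*q x))
        ≤ ∑ x, (p x * Real.log (p x / q x) - p x + q x) := by
      refine Finset.sum_le_sum fun x _ => ?_
      rcases eq_or_lt_of_le (hqnn x) with h | h
      · rw [hpzero x h.symm, ← h]
        norm_num
      · exact pointwise_bound (hpnn x) h
    calc ∑ x, 3*(p x - q x)^2/(2*(p x + 2*q x))
        ≤ ∑ x, (p x * Real.log (p x / q x) - p x + q x) := this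
      _ = D - (∑ x, p x) + (∑ x, q x) := by
          rw [hD]; rw [Finset.sum_add_distrib, Finset.sum_sub_distrib]
      _ = D := by rw [hpsum, hqsum]; ring
  -- step 2 : Cauchy-Schwarz (Sedrakyan)
  set s := Finset.univ.filter (fun x => 0 < p x + 2 * q x) with hs
  have hout : ∀ x, x ∉ s → p x = 0 ∧ q x = 0 := by
    intro x hx
    simp only [hs, Finset.mem_filter, Finset.mem_univ, true_and, not_lt] at hx
    constructor <;> nlinarith [hpnn x, hqnn x]
  have hVs : ∑ x, |p x - q x| = ∑ x ∈ s, |p x - q x| := by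
    refine (Finset.sum_subset (Finset.subset_univ s) ?_).symm
    intro x _ hx
    rcases hout x hx with ⟨h1, h2⟩
    simp [h1, h2]
  have hws : ∑ x ∈ s, (p x + 2 * q x) = 3 := by
    have : ∑ x ∈ s, (p x + 2 * q x) = ∑ x, (p x + 2 * q x) := by
      refine Finset.sum_subset (Finset.subset_univ s) ?_
      intro x _ hx
      rcases hout x hx with ⟨h1, h2⟩
      simp [h1, h2]
    rw [this, Finset.sum_add_distrib, ← Finset.mul_sum, hpsum, hqsum]; norm_num
  have hsed := Finset.sq_sum_div_le_sum_sq_div s (fun x => |p x - q x|)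
    (g := fun x => p x + 2 * q x) (fun x hx => by
      simp only [hs, Finset.mem_filter] at hx; exact hx.2)
  rw [hws] at hsed
  have hCS : (∑ x, |p x - q x|)^2 ≤ 2 * D := by
    have h1 : ∑ x ∈ s, |p x - q x|^2 / (p x + 2*q x)
        ≤ ∑ x, (p x - q x)^2 / (p x + 2*q x) := by
      refine Finset.sum_le_sum_of_subset_of_nonneg (Finset.subset_univ s) ?_ |>.trans ?_
      · intro x _ _
        exact div_nonneg (sq_nonneg _) (by nlinarith [hpnn x, hqnn x])
      · refine le_of_eq (Finset.sum_congr rfl fun x _ => by rw [sq_abs])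
    have h2 : ∑ x, (p x - q x)^2 / (p x + 2*q x)
        ≤ 2/3 * D := by
      have : ∑ x, 3*(p x - q x)^2/(2*(p x + 2*q x))
          = 3/2 * ∑ x, (p x - q x)^2 / (p x + 2*q x) := by
        rw [Finset.mul_sum]
        refine Finset.sum_congr rfl fun x _ => ?_
        rcases eq_or_ne (p x + 2*q x) 0 with h | h
        · simp [h]
        · field_simp
      linarith [hstep1, this ▸ hstep1]
    have h3 : (∑ x, |p x - q x|)^2 / 3 ≤ 2/3 * D := by
      rw [hVs]; exact hsed.trans (h1.trans h2)
    linarith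
  have hnn : 0 ≤ ∑ x, |p x - q x| := Finset.sum_nonneg fun x _ => abs_nonneg _
  calc ∑ x, |p x - q x| = Real.sqrt ((∑ x, |p x - q x|)^2) := (Real.sqrt_sq hnn).symm
    _ ≤ Real.sqrt (2 * D) := Real.sqrt_le_sqrt hCS
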